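/- Suppose n ∈ ℤ_{−ε}, so that π(ε,n) is reducible. Then π(ε,n) is completely reducible if and only if (ε,n) = (−1,0). Moreover, for (ε,n) = (−1,0), V_{−1} is the direct sum of the two subspaces span{v_j : j ≥ 1} and span{v_j : j ≤ −1}, and each of these is an irreducible submodule of π(−1,0). -/

import Mathlib

namespace SL2Deform

/-- The index set `ℤ_ε = {j : ℤ | (-1)^j = ε}`, for a sign `ε ∈ {1, -1}`
(i.e. a unit of `ℤ`). -/
abbrev idx (ε : ℤˣ) : Type := {j : ℤ // (-1 : ℤˣ) ^ j = ε}

/-- `V ε`: the complex vector space of finitely supported functions on `ℤ_ε`,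
with standard basis `{v_j}`. -/
abbrev V (ε : ℤˣ) : Type := idx ε →₀ ℂ

/-- The standard basis vector `v_j` of `V ε`, for `j ∈ ℤ_ε`. -/
noncomputable def bv (ε : ℤˣ) (j : ℤ) (h : (-1 : ℤˣ) ^ j = ε) : V ε :=
  Finsupp.single ⟨j, h⟩ 1

lemma parity_two : (-1 : ℤˣ) ^ (2 : ℤ) = 1 := by decide
lemma parity_neg_two : (-1 : ℤˣ) ^ (-2 : ℤ) = 1 := by decide
lemma parity_zero : (-1 : ℤˣ) ^ (0 : ℤ) = 1 := by decide

lemma parity_shift {ε : ℤˣ} {j : ℤ} (h : (-1 : ℤˣ) ^ j = ε) {s : ℤ}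
    (hs : (-1 : ℤˣ) ^ s = 1) : (-1 : ℤˣ) ^ (j + s) = ε := by
  rw [zpow_add, h, hs, mul_one]

/-- If `m ∈ ℤ_{-ε}` then `m + 1 ∈ ℤ_ε`. -/
lemma parity_succ {ε : ℤˣ} {m : ℤ} (h : (-1 : ℤˣ) ^ m = -ε) :
    (-1 : ℤˣ) ^ (m + 1) = ε := by
  rw [zpow_add, h, zpow_one]
  simp

/-- If `m ∈ ℤ_{-ε}` then `m - 1 ∈ ℤ_ε`. -/
lemma parity_pred {ε : ℤˣ} {m : ℤ} (h : (-1 : ℤˣ) ^ m = -ε) :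
    (-1 : ℤˣ) ^ (m - 1) = ε := by
  rw [sub_eq_add_neg, zpow_add, h, zpow_neg, zpow_one]
  simp

/-- The linear operator on `V ε` sending `v_j` to `c j • v_{j+s}`,
for an even shift `s`. -/
noncomputable def shiftOp (ε : ℤˣ) (s : ℤ) (hs : (-1 : ℤˣ) ^ s = 1) (c : ℤ → ℂ) :
    V ε →ₗ[ℂ] V ε :=
  Finsupp.lsum ℂ fun j =>
    LinearMap.toSpanSingleton ℂ (V ε)
      (Finsupp.single ⟨j.1 + s, parity_shift j.2 hs⟩ (c j.1))

/-- `H v_j = j • v_j`. -/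
noncomputable def Hop (ε : ℤˣ) : V ε →ₗ[ℂ] V ε :=
  shiftOp ε 0 parity_zero fun j => (j : ℂ)

/-- Principal series: `E v_j = ½(ν + j + 1) • v_{j+2}`. -/
noncomputable def Eop (ε : ℤˣ) (ν : ℂ) : V ε →ₗ[ℂ] V ε :=
  shiftOp ε 2 parity_two fun j => (1 / 2 : ℂ) * (ν + j + 1)

/-- Principal series: `F v_j = ½(ν - j + 1) • v_{j-2}`. -/
noncomputable def Fop (ε : ℤˣ) (ν : ℂ) : V ε →ₗ[ℂ] V ε :=
  shiftOp ε (-2) parity_neg_two fun j => (1 / 2 : ℂ) * (ν - j + 1)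

/-- `f_m(ν) = ½ |ν²-m²|^{1/2} (ν+m)/|ν+m|` for `ν ≠ -m`, and `f_m(-m) = 0`. -/
noncomputable def fm (m : ℤ) (ν : ℂ) : ℂ :=
  if ν = -(m : ℂ) then 0
  else (1 / 2 : ℂ) * (Real.sqrt ‖ν ^ 2 - (m : ℂ) ^ 2‖ : ℝ) * (ν + m) /
    (‖ν + (m : ℂ)‖ : ℝ)

/-- Deformed module: `E v_{m-1} = f_m(ν) • v_{m+1}`, i.e. `E v_j = f_{j+1}(ν) • v_{j+2}`. -/
noncomputable def PEop (ε : ℤˣ) (ν : ℂ) : V ε →ₗ[ℂ] V ε :=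
  shiftOp ε 2 parity_two fun j => fm (j + 1) ν

/-- Deformed module: `F v_{m+1} = f_{-m}(ν) • v_{m-1}`, i.e. `F v_j = f_{-(j-1)}(ν) • v_{j-2}`. -/
noncomputable def PFop (ε : ℤˣ) (ν : ℂ) : V ε →ₗ[ℂ] V ε :=
  shiftOp ε (-2) parity_neg_two fun j => fm (1 - j) ν

/-- The module `π'(ε,ν)`: `E v_{m-1} = ½(ν - |m|) • v_{m+1}`,
i.e. `E v_j = ½(ν - |j+1|) • v_{j+2}`. -/
noncomputable def E'op (ε : ℤˣ) (ν : ℂ) : V ε →ₗ[ℂ] V ε :=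
  shiftOp ε 2 parity_two fun j => (1 / 2 : ℂ) * (ν - ((|j + 1| : ℤ) : ℂ))

/-- The module `π'(ε,ν)`: `F v_{m+1} = ½(ν + |m|) • v_{m-1}`,
i.e. `F v_j = ½(ν + |j-1|) • v_{j-2}`. -/
noncomputable def F'op (ε : ℤˣ) (ν : ℂ) : V ε →ₗ[ℂ] V ε :=
  shiftOp ε (-2) parity_neg_two fun j => (1 / 2 : ℂ) * (ν + ((|j - 1| : ℤ) : ℂ))

/-- `ν ∈ ℤ_{-ε}`: `ν` is an integer with `(-1)^ν = -ε`. -/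
def inZminus (ε : ℤˣ) (ν : ℂ) : Prop :=
  ∃ n : ℤ, ν = (n : ℂ) ∧ (-1 : ℤˣ) ^ n = -ε

section ModuleNotions

variable {M : Type*} [AddCommGroup M] [Module ℂ M]
variable {N : Type*} [AddCommGroup N] [Module ℂ N]

/-- `W` is a submodule for the module with operators `A, B, C`: it is invariant
under all three operators. -/
def Invariant (A B C : M →ₗ[ℂ] M) (W : Submodule ℂ M) : Prop :=
  (∀ x ∈ W, A x ∈ W) ∧ (∀ x ∈ W, B x ∈ W) ∧ (∀ x ∈ W, C x ∈ W)

/-- The module with operators `A, B, C` is irreducible: its only submodules are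
`0` and the whole space. -/
def IsIrreducibleRep (A B C : M →ₗ[ℂ] M) : Prop :=
  ∀ W : Submodule ℂ M, Invariant A B C W → W = ⊥ ∨ W = ⊤

/-- `W` is an irreducible submodule: invariant, nonzero, and with no nonzero
proper invariant subspace. -/
def IsIrreducibleSubmodule (A B C : M →ₗ[ℂ] M) (W : Submodule ℂ M) : Prop :=
  Invariant A B C W ∧ W ≠ ⊥ ∧
    ∀ U : Submodule ℂ M, Invariant A B C U → U ≤ W → U = ⊥ ∨ U = W

/-- The module with operators `A, B, C` is completely reducible: every invariant
subspace has an invariant complement. -/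
def CompletelyReducible (A B C : M →ₗ[ℂ] M) : Prop :=
  ∀ W : Submodule ℂ M, Invariant A B C W →
    ∃ U : Submodule ℂ M, Invariant A B C U ∧ IsCompl W U

/-- The two modules (given by operator triples) are isomorphic. -/
def Intertwined (A B C : M →ₗ[ℂ] M) (A' B' C' : N →ₗ[ℂ] N) : Prop :=
  ∃ e : M ≃ₗ[ℂ] N, (∀ x, e (A x) = A' (e x)) ∧ (∀ x, e (B x) = B' (e x)) ∧
    (∀ x, e (C x) = C' (e x))

/-- An invariant Hermitian form for the module with operators `A, B, C`
(`A` playing the role of `H`, `B` of `E`, `C` of `F`): a sesquilinear form,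
conjugate-symmetric, with `⟨Hv,w⟩ = ⟨v,Hw⟩`, `⟨Ev,w⟩ + ⟨v,Fw⟩ = 0`,
`⟨Fv,w⟩ + ⟨v,Ew⟩ = 0`. -/
structure IsInvHermForm (A B C : M →ₗ[ℂ] M) (Φ : M → M → ℂ) : Prop where
  add_left : ∀ u v w, Φ (u + v) w = Φ u w + Φ v w
  smul_left : ∀ (a : ℂ) (v w : M), Φ (a • v) w = a * Φ v w
  conj_symm : ∀ v w, Φ w v = (starRingEnd ℂ) (Φ v w)
  inv_A : ∀ v w, Φ (A v) w = Φ v (A w)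
  inv_BC : ∀ v w, Φ (B v) w + Φ v (C w) = 0
  inv_CB : ∀ v w, Φ (C v) w + Φ v (B w) = 0

end ModuleNotions

/-- `span{v_j : j ≥ n}`. -/
noncomputable def spanGE (ε : ℤˣ) (n : ℤ) : Submodule ℂ (V ε) :=
  Submodule.span ℂ {x : V ε | ∃ j : idx ε, n ≤ j.1 ∧ x = Finsupp.single j 1}

/-- `span{v_j : j ≤ n}`. -/
noncomputable def spanLE (ε : ℤˣ) (n : ℤ) : Submodule ℂ (V ε) :=
  Submodule.span ℂ {x : V ε | ∃ j : idx ε, j.1 ≤ n ∧ x = Finsupp.single j 1}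

/-- `span{v_j : |j| ≤ n}`. -/
noncomputable def spanAbsLE (ε : ℤˣ) (n : ℤ) : Submodule ℂ (V ε) :=
  Submodule.span ℂ {x : V ε | ∃ j : idx ε, |j.1| ≤ n ∧ x = Finsupp.single j 1}

/-- The diagonal operator `S v_j = c j • v_j`. -/
noncomputable def diagMap (ε : ℤˣ) (c : idx ε → ℂ) : V ε →ₗ[ℂ] V ε :=
  Finsupp.lsum ℂ fun j => LinearMap.toSpanSingleton ℂ (V ε) (Finsupp.single j (c j))

section Basics
variable {ε : ℤˣ}

lemma shiftOp_single {s : ℤ} (hs : (-1 : ℤˣ) ^ s = 1) (c : ℤ → ℂ) (j : idx ε) (a : ℂ) :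
    shiftOp ε s hs c (Finsupp.single j a)
      = a • Finsupp.single (⟨j.1 + s, parity_shift j.2 hs⟩ : idx ε) (c j.1) := by
  simp [shiftOp, Finsupp.lsum_single, LinearMap.toSpanSingleton_apply]

lemma single_congr {p q : ℤ} (hp : (-1 : ℤˣ) ^ p = ε) (hq : (-1 : ℤˣ) ^ q = ε)
    (hpq : p = q) (a : ℂ) :
    Finsupp.single (⟨p, hp⟩ : idx ε) a = Finsupp.single (⟨q, hq⟩ : idx ε) a := by
  subst hpq; rfl

lemma Hop_single (j : idx ε) (a : ℂ) :
    Hop ε (Finsupp.single j a) = Finsupp.single j ((j.1 : ℂ) * a) := by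
  rw [Hop, shiftOp_single]
  rw [Finsupp.smul_single, single_congr (parity_shift j.2 parity_zero) j.2 (add_zero j.1)]
  rw [smul_eq_mul, mul_comm]

lemma Hop_apply (x : V ε) (k : idx ε) : (Hop ε x) k = (k.1 : ℂ) * x k := by
  induction x using Finsupp.induction_linear with
  | zero => simp
  | add a b ha hb => simp [map_add, ha, hb, mul_add]
  | single j a =>
    rw [Hop_single]
    classical
    rcases eq_or_ne j k with rfl | h
    · simp
    · simp [Finsupp.single_eq_of_ne' h]

lemma Eop_single (ν : ℂ) (j : idx ε) (a : ℂ) :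
    Eop ε ν (Finsupp.single j a)
      = a • Finsupp.single (⟨j.1 + 2, parity_shift j.2 parity_two⟩ : idx ε)
          ((1 / 2 : ℂ) * (ν + j.1 + 1)) := by
  rw [Eop, shiftOp_single]

lemma Fop_single (ν : ℂ) (j : idx ε) (a : ℂ) :
    Fop ε ν (Finsupp.single j a)
      = a • Finsupp.single (⟨j.1 + -2, parity_shift j.2 parity_neg_two⟩ : idx ε)
          ((1 / 2 : ℂ) * (ν - j.1 + 1)) := by
  rw [Fop, shiftOp_single]

lemma idx_odd (j : idx ε') (h : ε' = -1) : Odd j.1 := by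
  rcases Int.even_or_odd j.1 with he | ho
  · exfalso
    obtain ⟨k, hk⟩ := he
    have : (-1 : ℤˣ) ^ j.1 = 1 := by
      rw [hk, zpow_add]
      exact Int.units_mul_self _
    rw [j.2, h] at this
    exact absurd this (by decide)
  · exact ho

end Basics

section Proj
variable {ε : ℤˣ}

lemma sum_single_subset (x : V ε) (T : Finset (idx ε)) (hT : x.support ⊆ T) :
    ∑ k ∈ T, Finsupp.single k (x k) = x := by
  classical
  conv_rhs => rw [← Finsupp.sum_single x]
  rw [Finsupp.sum]
  exact (Finset.sum_subset hT (by
    intro k _ hk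
    rw [Finsupp.notMem_support_iff.mp hk, Finsupp.single_zero])).symm

lemma idx_cast_ne {j k : idx ε} (h : j ≠ k) : (j.1 : ℂ) ≠ (k.1 : ℂ) := by
  intro hc
  exact h (Subtype.ext (by exact_mod_cast hc))

lemma H_proj (W : Submodule ℂ (V ε)) (hH : ∀ x ∈ W, Hop ε x ∈ W) :
    ∀ (T : Finset (idx ε)) (x : V ε), x ∈ W → x.support ⊆ T →
      ∀ j, Finsupp.single j (x j) ∈ W := by
  classical
  intro T
  induction T using Finset.induction_on with
  | empty =>
    intro x hx hs j
    have hx0 : x = 0 := by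
      ext k
      by_contra hk
      exact absurd (hs (Finsupp.mem_support_iff.mpr hk)) (Finset.notMem_empty k)
    simp [hx0]
  | insert a T ha ih =>
    intro x hx hs j
    set y := Hop ε x - (a.1 : ℂ) • x with hy
    have hyW : y ∈ W := W.sub_mem (hH x hx) (W.smul_mem _ hx)
    have hyk : ∀ k, y k = ((k.1 : ℂ) - a.1) * x k := by
      intro k
      simp only [hy, Finsupp.sub_apply, Finsupp.smul_apply, Hop_apply, smul_eq_mul]
      ring
    have hys : y.support ⊆ T := by
      intro k hk
      have hk' : y k ≠ 0 := Finsupp.mem_support_iff.mp hk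
      rw [hyk] at hk'
      have hxk : x k ≠ 0 := right_ne_zero_of_mul hk'
      have hka : k ≠ a := by
        rintro rfl
        exact hk' (by ring_nf)
      rcases Finset.mem_insert.mp (hs (Finsupp.mem_support_iff.mpr hxk)) with h | h
      · exact absurd h hka
      · exact h
    have key : ∀ k, k ≠ a → Finsupp.single k (x k) ∈ W := by
      intro k hk
      have h1 := ih y hyW hys k
      rw [hyk] at h1
      have hne : ((k.1 : ℂ) - a.1) ≠ 0 := sub_ne_zero.mpr (idx_cast_ne hk)
      have h2 := W.smul_mem (((k.1 : ℂ) - a.1))⁻¹ h1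
      rwa [Finsupp.smul_single, smul_eq_mul, inv_mul_cancel_left₀ hne] at h2
    by_cases hja : j = a
    · subst hja
      have hsum : Finsupp.single j (x j) + ∑ k ∈ T, Finsupp.single k (x k) = x := by
        rw [← Finset.sum_insert (f := fun k => Finsupp.single k (x k)) ha]
        exact sum_single_subset x (insert j T) hs
      have hx' : Finsupp.single j (x j) = x - ∑ k ∈ T, Finsupp.single k (x k) :=
        eq_sub_of_add_eq hsum
      rw [hx']
      exact W.sub_mem hx (Submodule.sum_mem _ fun k hk =>
        key k (fun h => ha (h ▸ hk)))
    · exact key j hja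

lemma mem_proj {W : Submodule ℂ (V ε)} (hH : ∀ x ∈ W, Hop ε x ∈ W)
    {x : V ε} (hx : x ∈ W) (j : idx ε) : Finsupp.single j (x j) ∈ W :=
  H_proj W hH x.support x hx subset_rfl j

lemma mem_single_one {W : Submodule ℂ (V ε)} (hH : ∀ x ∈ W, Hop ε x ∈ W)
    {x : V ε} (hx : x ∈ W) {j : idx ε} (hj : x j ≠ 0) :
    Finsupp.single j (1 : ℂ) ∈ W := by
  have h2 := W.smul_mem (x j)⁻¹ (mem_proj hH hx j)
  rwa [Finsupp.smul_single, smul_eq_mul, inv_mul_cancel₀ hj] at h2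

end Proj

section Spans
variable {ε : ℤˣ}

lemma single_mem_spanGE {n : ℤ} {j : idx ε} (h : n ≤ j.1) (a : ℂ) :
    Finsupp.single j a ∈ spanGE ε n := by
  have h1 : Finsupp.single j (1 : ℂ) ∈ spanGE ε n :=
    Submodule.subset_span ⟨j, h, rfl⟩
  have := (spanGE ε n).smul_mem a h1
  rwa [Finsupp.smul_single, smul_eq_mul, mul_one] at this

lemma single_mem_spanLE {n : ℤ} {j : idx ε} (h : j.1 ≤ n) (a : ℂ) :
    Finsupp.single j a ∈ spanLE ε n := by
  have h1 : Finsupp.single j (1 : ℂ) ∈ spanLE ε n :=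
    Submodule.subset_span ⟨j, h, rfl⟩
  have := (spanLE ε n).smul_mem a h1
  rwa [Finsupp.smul_single, smul_eq_mul, mul_one] at this

lemma spanGE_vanish {n : ℤ} {x : V ε} (hx : x ∈ spanGE ε n) {k : idx ε}
    (hk : k.1 < n) : x k = 0 := by
  classical
  have hle : spanGE ε n ≤ LinearMap.ker (Finsupp.lapply (M := ℂ) (R := ℂ) k) := by
    apply Submodule.span_le.mpr
    rintro _ ⟨j, hj, rfl⟩
    have hjk : j ≠ k := fun h => absurd (h ▸ hj) (not_le.mpr hk)
    simp [LinearMap.mem_ker, Finsupp.single_eq_of_ne' hjk]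
  exact hle hx

lemma spanLE_vanish {n : ℤ} {x : V ε} (hx : x ∈ spanLE ε n) {k : idx ε}
    (hk : n < k.1) : x k = 0 := by
  classical
  have hle : spanLE ε n ≤ LinearMap.ker (Finsupp.lapply (M := ℂ) (R := ℂ) k) := by
    apply Submodule.span_le.mpr
    rintro _ ⟨j, hj, rfl⟩
    have hjk : j ≠ k := fun h => absurd (h ▸ hj) (not_le.mpr hk)
    simp [LinearMap.mem_ker, Finsupp.single_eq_of_ne' hjk]
  exact hle hx

/-- If every basis vector in the support is in `W`, then `x ∈ W`. -/
lemma mem_of_support {W : Submodule ℂ (V ε)} {x : V ε}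
    (h : ∀ k ∈ x.support, Finsupp.single k (1 : ℂ) ∈ W) : x ∈ W := by
  classical
  rw [← Finsupp.sum_single x, Finsupp.sum]
  refine Submodule.sum_mem _ fun k hk => ?_
  have := W.smul_mem (x k) (h k hk)
  rwa [Finsupp.smul_single, smul_eq_mul, mul_one] at this

end Spans

section Inv
variable {ε : ℤˣ}

lemma inv_of_gen {f : V ε →ₗ[ℂ] V ε} {s : Set (V ε)}
    (h : ∀ x ∈ s, f x ∈ Submodule.span ℂ s) :
    ∀ x ∈ Submodule.span ℂ s, f x ∈ Submodule.span ℂ s := fun x hx =>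
  (Submodule.map_span_le f s _).mpr h (Submodule.mem_map_of_mem hx)

lemma odd_units {m : ℤ} (h : Odd m) : (-1 : ℤˣ) ^ m = -1 := by
  obtain ⟨k, rfl⟩ := h
  rw [zpow_add, zpow_one, zpow_mul, parity_two, one_zpow, one_mul]

lemma even_units {m : ℤ} (h : (-1 : ℤˣ) ^ m = 1) : Even m := by
  rcases Int.even_or_odd m with he | ho
  · exact he
  · rw [odd_units ho] at h
    exact absurd h (by decide)

lemma parity_sub_even {p q : ℤ} (hp : (-1 : ℤˣ) ^ p = ε) (hq : (-1 : ℤˣ) ^ q = ε) :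
    Even (p - q) := by
  apply even_units
  rw [sub_eq_add_neg, zpow_add, hp, zpow_neg, hq]
  exact mul_inv_cancel ε

lemma parity_neg {m : ℤ} {δ : ℤˣ} (h : (-1 : ℤˣ) ^ m = δ) :
    (-1 : ℤˣ) ^ (-m) = δ := by
  rw [zpow_neg, h]
  exact Int.units_inv_eq_self δ

lemma invariant_spanGE {n : ℤ} (hn : (-1 : ℤˣ) ^ n = -ε) :
    Invariant (Hop ε) (Eop ε (n : ℂ)) (Fop ε (n : ℂ)) (spanGE ε (n + 1)) := by
  have hpar : (-1 : ℤˣ) ^ (n + 1) = ε := parity_succ hn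
  refine ⟨inv_of_gen ?_, inv_of_gen ?_, inv_of_gen ?_⟩
  · rintro _ ⟨j, hj, rfl⟩
    rw [Hop_single]
    exact single_mem_spanGE hj _
  · rintro _ ⟨j, hj, rfl⟩
    rw [Eop_single]
    exact Submodule.smul_mem _ _ (single_mem_spanGE (show n + 1 ≤ j.1 + 2 by omega) _)
  · rintro _ ⟨j, hj, rfl⟩
    rw [Fop_single, one_smul]
    by_cases hje : j.1 = n + 1
    · have hc : (1 / 2 : ℂ) * ((n : ℂ) - (j.1 : ℂ) + 1) = 0 := by
        rw [hje]; push_cast; ring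
      rw [hc, Finsupp.single_zero]
      exact Submodule.zero_mem _
    · obtain ⟨t, ht⟩ := parity_sub_even j.2 hpar
      exact single_mem_spanGE (show n + 1 ≤ j.1 + -2 by omega) _

lemma invariant_spanLE {n : ℤ} (hn : (-1 : ℤˣ) ^ n = -ε) :
    Invariant (Hop ε) (Eop ε (n : ℂ)) (Fop ε (n : ℂ)) (spanLE ε (-n - 1)) := by
  have hpar : (-1 : ℤˣ) ^ (-n - 1) = ε := parity_pred (parity_neg hn)
  refine ⟨inv_of_gen ?_, inv_of_gen ?_, inv_of_gen ?_⟩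
  · rintro _ ⟨j, hj, rfl⟩
    rw [Hop_single]
    exact single_mem_spanLE hj _
  · rintro _ ⟨j, hj, rfl⟩
    rw [Eop_single, one_smul]
    by_cases hje : j.1 = -n - 1
    · have hc : (1 / 2 : ℂ) * ((n : ℂ) + (j.1 : ℂ) + 1) = 0 := by
        rw [hje]; push_cast; ring
      rw [hc, Finsupp.single_zero]
      exact Submodule.zero_mem _
    · obtain ⟨t, ht⟩ := parity_sub_even j.2 hpar
      exact single_mem_spanLE (show j.1 + 2 ≤ -n - 1 by omega) _
  · rintro _ ⟨j, hj, rfl⟩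
    rw [Fop_single]
    exact Submodule.smul_mem _ _ (single_mem_spanLE (show j.1 + -2 ≤ -n - 1 by omega) _)

lemma invariant_top (A B C : V ε →ₗ[ℂ] V ε) : Invariant A B C ⊤ :=
  ⟨fun _ _ => trivial, fun _ _ => trivial, fun _ _ => trivial⟩

lemma invariant_bot (A B C : V ε →ₗ[ℂ] V ε) : Invariant A B C ⊥ := by
  refine ⟨?_, ?_, ?_⟩ <;>
  · intro x hx
    rw [Submodule.mem_bot] at hx ⊢
    rw [hx, map_zero]

end Inv

section Steps
variable {ε : ℤˣ}

lemma single_unscale {W : Submodule ℂ (V ε)} {k : idx ε} {c : ℂ} (hc : c ≠ 0)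
    (h : Finsupp.single k c ∈ W) : Finsupp.single k (1 : ℂ) ∈ W := by
  have := W.smul_mem c⁻¹ h
  rwa [Finsupp.smul_single, smul_eq_mul, inv_mul_cancel₀ hc] at this

lemma units_even {m : ℤ} (h : Even m) : (-1 : ℤˣ) ^ m = 1 := by
  obtain ⟨k, rfl⟩ := h
  rw [zpow_add]
  exact Int.units_mul_self _

lemma p1 : (-1 : ℤˣ) ^ (1 : ℤ) = -1 := by decide
lemma pm1 : (-1 : ℤˣ) ^ (-1 : ℤ) = -1 := by decide

variable {W : Submodule ℂ (V (-1))}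

lemma stepE (hW : Invariant (Hop (-1)) (Eop (-1) 0) (Fop (-1) 0) W) {j : idx (-1)} (hj : j.1 ≠ -1) (h : Finsupp.single j (1 : ℂ) ∈ W) :
    ∀ h2 : (-1 : ℤˣ) ^ (j.1 + 2) = -1,
      Finsupp.single (⟨j.1 + 2, h2⟩ : idx (-1)) (1 : ℂ) ∈ W := by
  intro h2
  have hE := hW.2.1 _ h
  rw [Eop_single, one_smul] at hE
  have hc : (1 / 2 : ℂ) * ((0 : ℂ) + (j.1 : ℂ) + 1) ≠ 0 := by
    have hz : ((j.1 + 1 : ℤ) : ℂ) ≠ 0 := Int.cast_ne_zero.mpr (by omega)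
    push_cast at hz
    intro h0
    apply hz
    linear_combination 2 * h0
  exact single_unscale hc hE

lemma stepF (hW : Invariant (Hop (-1)) (Eop (-1) 0) (Fop (-1) 0) W) {j : idx (-1)} (hj : j.1 ≠ 1) (h : Finsupp.single j (1 : ℂ) ∈ W) :
    ∀ h2 : (-1 : ℤˣ) ^ (j.1 - 2) = -1,
      Finsupp.single (⟨j.1 - 2, h2⟩ : idx (-1)) (1 : ℂ) ∈ W := by
  intro h2
  have hF := hW.2.2 _ h
  rw [Fop_single, one_smul] at hF
  have hc : (1 / 2 : ℂ) * ((0 : ℂ) - (j.1 : ℂ) + 1) ≠ 0 := by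
    have hz : ((1 - j.1 : ℤ) : ℂ) ≠ 0 := Int.cast_ne_zero.mpr (by omega)
    push_cast at hz
    intro h0
    apply hz
    linear_combination 2 * h0
  have := single_unscale hc hF
  have he : Finsupp.single (⟨j.1 + -2, parity_shift j.2 parity_neg_two⟩ : idx (-1)) (1:ℂ)
      = Finsupp.single (⟨j.1 - 2, h2⟩ : idx (-1)) (1:ℂ) :=
    single_congr _ _ (by ring) _
  rwa [he] at this

lemma reachUp (hW : Invariant (Hop (-1)) (Eop (-1) 0) (Fop (-1) 0) W) : ∀ (m : ℕ) (j : ℤ) (hj : (-1 : ℤˣ) ^ j = -1), 1 ≤ j →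
    Finsupp.single (⟨j, hj⟩ : idx (-1)) (1 : ℂ) ∈ W →
    ∀ h2 : (-1 : ℤˣ) ^ (j + 2 * m) = -1,
      Finsupp.single (⟨j + 2 * m, h2⟩ : idx (-1)) (1 : ℂ) ∈ W := by
  intro m
  induction m with
  | zero =>
    intro j hj _ hmem h2
    rw [single_congr h2 hj (by push_cast; ring)]
    exact hmem
  | succ m ih =>
    intro j hj hj1 hmem h2
    have hpar : (-1 : ℤˣ) ^ (j + 2 * (m : ℤ)) = -1 :=
      parity_shift hj (units_even ⟨(m : ℤ), by ring⟩)
    have h1 := ih j hj hj1 hmem hpar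
    have h3 := stepE hW (j := ⟨j + 2 * (m : ℤ), hpar⟩) (show j + 2*(m:ℤ) ≠ -1 by omega) h1
      (parity_shift hpar parity_two)
    rw [single_congr _ h2 (by push_cast; ring)] at h3
    exact h3

lemma reachUpNeg (hW : Invariant (Hop (-1)) (Eop (-1) 0) (Fop (-1) 0) W) : ∀ (m : ℕ) (j : ℤ) (hj : (-1 : ℤˣ) ^ j = -1), j + 2 * m ≤ -1 →
    Finsupp.single (⟨j, hj⟩ : idx (-1)) (1 : ℂ) ∈ W →
    ∀ h2 : (-1 : ℤˣ) ^ (j + 2 * m) = -1,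
      Finsupp.single (⟨j + 2 * m, h2⟩ : idx (-1)) (1 : ℂ) ∈ W := by
  intro m
  induction m with
  | zero =>
    intro j hj _ hmem h2
    rw [single_congr h2 hj (by push_cast; ring)]
    exact hmem
  | succ m ih =>
    intro j hj hj1 hmem h2
    have hm : j + 2 * ((m : ℤ) + 1) ≤ -1 := by push_cast at hj1 ⊢; omega
    have hpar : (-1 : ℤˣ) ^ (j + 2 * (m : ℤ)) = -1 :=
      parity_shift hj (units_even ⟨(m : ℤ), by ring⟩)
    have h1 := ih j hj (by omega) hmem hpar
    have h3 := stepE hW (j := ⟨j + 2 * (m : ℤ), hpar⟩) (show j + 2*(m:ℤ) ≠ -1 by omega) h1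
      (parity_shift hpar parity_two)
    rw [single_congr _ h2 (by push_cast; ring)] at h3
    exact h3

lemma reachDown (hW : Invariant (Hop (-1)) (Eop (-1) 0) (Fop (-1) 0) W) : ∀ (m : ℕ) (j : ℤ) (hj : (-1 : ℤˣ) ^ j = -1), j ≤ -1 →
    Finsupp.single (⟨j, hj⟩ : idx (-1)) (1 : ℂ) ∈ W →
    ∀ h2 : (-1 : ℤˣ) ^ (j - 2 * m) = -1,
      Finsupp.single (⟨j - 2 * m, h2⟩ : idx (-1)) (1 : ℂ) ∈ W := by
  intro m
  induction m with
  | zero =>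
    intro j hj _ hmem h2
    rw [single_congr h2 hj (by push_cast; ring)]
    exact hmem
  | succ m ih =>
    intro j hj hj1 hmem h2
    have hpar : (-1 : ℤˣ) ^ (j - 2 * (m : ℤ)) = -1 := by
      have hev : Even (-(2 * (m : ℤ))) := ⟨-(m : ℤ), by ring⟩
      have := parity_shift hj (units_even hev)
      rwa [show j + -(2 * (m:ℤ)) = j - 2 * (m:ℤ) by ring] at this
    have h1 := ih j hj hj1 hmem hpar
    have h3 := stepF hW (j := ⟨j - 2 * (m : ℤ), hpar⟩) (show j - 2*(m:ℤ) ≠ 1 by omega) h1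
      (by rw [show j - 2*(m:ℤ) - 2 = (j - 2*(m:ℤ)) + -2 by ring]
          exact parity_shift hpar parity_neg_two)
    rw [single_congr _ h2 (by push_cast; ring)] at h3
    exact h3

lemma reachDownPos (hW : Invariant (Hop (-1)) (Eop (-1) 0) (Fop (-1) 0) W) : ∀ (m : ℕ) (j : ℤ) (hj : (-1 : ℤˣ) ^ j = -1), 1 ≤ j - 2 * m →
    Finsupp.single (⟨j, hj⟩ : idx (-1)) (1 : ℂ) ∈ W →
    ∀ h2 : (-1 : ℤˣ) ^ (j - 2 * m) = -1,
      Finsupp.single (⟨j - 2 * m, h2⟩ : idx (-1)) (1 : ℂ) ∈ W := by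
  intro m
  induction m with
  | zero =>
    intro j hj _ hmem h2
    rw [single_congr h2 hj (by push_cast; ring)]
    exact hmem
  | succ m ih =>
    intro j hj hj1 hmem h2
    have hm : 1 ≤ j - 2 * ((m : ℤ) + 1) := by push_cast at hj1 ⊢; omega
    have hpar : (-1 : ℤˣ) ^ (j - 2 * (m : ℤ)) = -1 := by
      have hev : Even (-(2 * (m : ℤ))) := ⟨-(m : ℤ), by ring⟩
      have := parity_shift hj (units_even hev)
      rwa [show j + -(2 * (m:ℤ)) = j - 2 * (m:ℤ) by ring] at this
    have h1 := ih j hj (by omega) hmem hpar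
    have h3 := stepF hW (j := ⟨j - 2 * (m : ℤ), hpar⟩) (show j - 2*(m:ℤ) ≠ 1 by omega) h1
      (by rw [show j - 2*(m:ℤ) - 2 = (j - 2*(m:ℤ)) + -2 by ring]
          exact parity_shift hpar parity_neg_two)
    rw [single_congr _ h2 (by push_cast; ring)] at h3
    exact h3

end Steps

section Classify

variable {W : Submodule ℂ (V (-1))}

lemma memGE (hW : Invariant (Hop (-1)) (Eop (-1) 0) (Fop (-1) 0) W)
    (hv1 : Finsupp.single (⟨1, p1⟩ : idx (-1)) (1 : ℂ) ∈ W)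
    (j : idx (-1)) (hj : 1 ≤ j.1) : Finsupp.single j (1 : ℂ) ∈ W := by
  obtain ⟨k, hk⟩ := idx_odd j rfl
  have he : (1 : ℤ) + 2 * ((k.toNat : ℤ)) = j.1 := by omega
  have h2 : (-1 : ℤˣ) ^ ((1 : ℤ) + 2 * ((k.toNat : ℤ))) = -1 := he ▸ j.2
  have := reachUp hW k.toNat 1 p1 le_rfl hv1 h2
  rwa [single_congr h2 j.2 he] at this

lemma memTo1 (hW : Invariant (Hop (-1)) (Eop (-1) 0) (Fop (-1) 0) W)
    (j : idx (-1)) (hj : 1 ≤ j.1) (h : Finsupp.single j (1 : ℂ) ∈ W) :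
    Finsupp.single (⟨1, p1⟩ : idx (-1)) (1 : ℂ) ∈ W := by
  obtain ⟨k, hk⟩ := idx_odd j rfl
  have he : j.1 - 2 * ((k.toNat : ℤ)) = 1 := by omega
  have h2 : (-1 : ℤˣ) ^ (j.1 - 2 * ((k.toNat : ℤ))) = -1 := by rw [he]; exact p1
  have := reachDownPos hW k.toNat j.1 j.2 (by omega) h h2
  rwa [single_congr h2 p1 he] at this

lemma memLE (hW : Invariant (Hop (-1)) (Eop (-1) 0) (Fop (-1) 0) W)
    (hv1 : Finsupp.single (⟨-1, pm1⟩ : idx (-1)) (1 : ℂ) ∈ W)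
    (j : idx (-1)) (hj : j.1 ≤ -1) : Finsupp.single j (1 : ℂ) ∈ W := by
  obtain ⟨k, hk⟩ := idx_odd j rfl
  have he : (-1 : ℤ) - 2 * (((-1 - k).toNat : ℤ)) = j.1 := by omega
  have h2 : (-1 : ℤˣ) ^ ((-1 : ℤ) - 2 * (((-1 - k).toNat : ℤ))) = -1 := he ▸ j.2
  have := reachDown hW (-1 - k).toNat (-1) pm1 le_rfl hv1 h2
  rwa [single_congr h2 j.2 he] at this

lemma memToM1 (hW : Invariant (Hop (-1)) (Eop (-1) 0) (Fop (-1) 0) W)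
    (j : idx (-1)) (hj : j.1 ≤ -1) (h : Finsupp.single j (1 : ℂ) ∈ W) :
    Finsupp.single (⟨-1, pm1⟩ : idx (-1)) (1 : ℂ) ∈ W := by
  obtain ⟨k, hk⟩ := idx_odd j rfl
  have he : j.1 + 2 * (((-1 - k).toNat : ℤ)) = -1 := by omega
  have h2 : (-1 : ℤˣ) ^ (j.1 + 2 * (((-1 - k).toNat : ℤ))) = -1 := by rw [he]; exact pm1
  have := reachUpNeg hW (-1 - k).toNat j.1 j.2 (by omega) h h2
  rwa [single_congr h2 pm1 he] at this

lemma idx_neg_le {k : idx (-1)} (h : ¬ 1 ≤ k.1) : k.1 ≤ -1 := by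
  obtain ⟨t, ht⟩ := idx_odd k rfl
  omega

lemma classify (hW : Invariant (Hop (-1)) (Eop (-1) 0) (Fop (-1) 0) W) :
    W = ⊥ ∨ W = ⊤ ∨ W = spanGE (-1) 1 ∨ W = spanLE (-1) (-1) := by
  by_cases h1 : Finsupp.single (⟨1, p1⟩ : idx (-1)) (1 : ℂ) ∈ W
  · by_cases hm1 : Finsupp.single (⟨-1, pm1⟩ : idx (-1)) (1 : ℂ) ∈ W
    · -- W = ⊤
      right; left
      rw [Submodule.eq_top_iff']
      intro x
      apply mem_of_support
      intro k _
      by_cases hk1 : 1 ≤ k.1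
      · exact memGE hW h1 k hk1
      · exact memLE hW hm1 k (idx_neg_le hk1)
    · -- W = spanGE
      right; right; left
      apply le_antisymm
      · intro x hx
        apply mem_of_support
        intro k hk
        refine single_mem_spanGE ?_ _
        by_contra hk1
        have hkW : Finsupp.single k (1 : ℂ) ∈ W :=
          mem_single_one hW.1 hx (Finsupp.mem_support_iff.mp hk)
        exact hm1 (memToM1 hW k (idx_neg_le hk1) hkW)
      · apply Submodule.span_le.mpr
        rintro _ ⟨j, hj, rfl⟩
        exact memGE hW h1 j hj
  · by_cases hm1 : Finsupp.single (⟨-1, pm1⟩ : idx (-1)) (1 : ℂ) ∈ W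
    · -- W = spanLE
      right; right; right
      apply le_antisymm
      · intro x hx
        apply mem_of_support
        intro k hk
        by_cases hk1 : 1 ≤ k.1
        · exfalso
          have hkW : Finsupp.single k (1 : ℂ) ∈ W :=
            mem_single_one hW.1 hx (Finsupp.mem_support_iff.mp hk)
          exact h1 (memTo1 hW k hk1 hkW)
        · exact single_mem_spanLE (idx_neg_le hk1) _
      · apply Submodule.span_le.mpr
        rintro _ ⟨j, hj, rfl⟩
        exact memLE hW hm1 j hj
    · -- W = ⊥
      left
      rw [eq_bot_iff]
      intro x hx
      rw [Submodule.mem_bot]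
      by_contra hx0
      obtain ⟨k, hk⟩ : ∃ k, x k ≠ 0 := by
        by_contra hc
        push_neg at hc
        exact hx0 (Finsupp.ext hc)
      have hkW : Finsupp.single k (1 : ℂ) ∈ W := mem_single_one hW.1 hx hk
      by_cases hk1 : 1 ≤ k.1
      · exact h1 (memTo1 hW k hk1 hkW)
      · exact hm1 (memToM1 hW k (idx_neg_le hk1) hkW)

lemma isCompl_GE_LE : IsCompl (spanGE (-1) 1) (spanLE (-1) (-1)) := by
  constructor
  · rw [disjoint_iff]
    rw [eq_bot_iff]
    intro x hx
    rw [Submodule.mem_inf] at hx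
    rw [Submodule.mem_bot]
    ext k
    rcases lt_or_ge k.1 1 with h | h
    · exact spanGE_vanish hx.1 h
    · exact spanLE_vanish hx.2 (by omega)
  · rw [codisjoint_iff, Submodule.eq_top_iff']
    intro x
    apply mem_of_support
    intro k _
    by_cases hk1 : 1 ≤ k.1
    · exact Submodule.mem_sup_left (single_mem_spanGE hk1 _)
    · exact Submodule.mem_sup_right (single_mem_spanLE (idx_neg_le hk1) _)

end Classify

set_option maxHeartbeats 1000000

lemma invGE1 : Invariant (Hop (-1)) (Eop (-1) 0) (Fop (-1) 0) (spanGE (-1) 1) := by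
  have := invariant_spanGE (ε := -1) (n := 0) (by decide)
  simpa using this

lemma invLE1 : Invariant (Hop (-1)) (Eop (-1) 0) (Fop (-1) 0) (spanLE (-1) (-1)) := by
  have := invariant_spanLE (ε := -1) (n := 0) (by decide)
  simpa using this

lemma vm1_not_mem_spanGE : Finsupp.single (⟨-1, pm1⟩ : idx (-1)) (1 : ℂ) ∉ spanGE (-1) 1 := by
  intro h
  have h0 := spanGE_vanish h (k := ⟨-1, pm1⟩) (show (-1:ℤ) < 1 by norm_num)
  rw [Finsupp.single_eq_same] at h0
  exact one_ne_zero h0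

lemma irred_GE : IsIrreducibleSubmodule (Hop (-1)) (Eop (-1) 0) (Fop (-1) 0) (spanGE (-1) 1) := by
  refine ⟨invGE1, ?_, ?_⟩
  · intro hb
    have h := single_mem_spanGE (ε := -1) (n := 1) (j := ⟨1, p1⟩) (show (1:ℤ) ≤ 1 from le_rfl) (1 : ℂ)
    rw [hb, Submodule.mem_bot] at h
    exact one_ne_zero (Finsupp.single_eq_zero.mp h)
  · intro U hU hle
    rcases classify hU with h | h | h | h
    · exact Or.inl h
    · exfalso; subst h
      exact vm1_not_mem_spanGE (hle Submodule.mem_top)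
    · exact Or.inr h
    · exfalso; subst h
      exact vm1_not_mem_spanGE (hle (single_mem_spanLE (n := -1) (j := ⟨-1, pm1⟩) (show (-1:ℤ) ≤ -1 from le_rfl) 1))

lemma v1_not_mem_spanLE : Finsupp.single (⟨1, p1⟩ : idx (-1)) (1 : ℂ) ∉ spanLE (-1) (-1) := by
  intro h
  have h0 := spanLE_vanish h (k := ⟨1, p1⟩) (show (-1:ℤ) < 1 by norm_num)
  rw [Finsupp.single_eq_same] at h0
  exact one_ne_zero h0

lemma irred_LE : IsIrreducibleSubmodule (Hop (-1)) (Eop (-1) 0) (Fop (-1) 0) (spanLE (-1) (-1)) := by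
  refine ⟨invLE1, ?_, ?_⟩
  · intro hb
    have h := single_mem_spanLE (ε := -1) (n := -1) (j := ⟨-1, pm1⟩) (show (-1:ℤ) ≤ -1 from le_rfl) (1 : ℂ)
    rw [hb, Submodule.mem_bot] at h
    exact one_ne_zero (Finsupp.single_eq_zero.mp h)
  · intro U hU hle
    rcases classify hU with h | h | h | h
    · exact Or.inl h
    · exfalso; subst h
      exact v1_not_mem_spanLE (hle Submodule.mem_top)
    · exfalso; subst h
      exact v1_not_mem_spanLE (hle (single_mem_spanGE (n := 1) (j := ⟨1, p1⟩) (show (1:ℤ) ≤ 1 from le_rfl) 1))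
    · exact Or.inr h

/-- For `n ∈ ℤ_{-ε}` (so `π(ε,n)` is reducible), `π(ε,n)` is completely
reducible iff `(ε,n) = (-1,0)`; moreover `V_{-1}` is the direct sum of the two
subspaces `span{v_j : j ≥ 1}` and `span{v_j : j ≤ -1}`, each of which is an
irreducible submodule of `π(-1,0)`. -/
theorem principal_series_completely_reducible_iff (ε : ℤˣ) (n : ℤ)
    (hn : (-1 : ℤˣ) ^ n = -ε) :
    (CompletelyReducible (Hop ε) (Eop ε (n : ℂ)) (Fop ε (n : ℂ)) ↔ ε = -1 ∧ n = 0) ∧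
    (IsCompl (spanGE (-1) 1) (spanLE (-1) (-1)) ∧
      IsIrreducibleSubmodule (Hop (-1)) (Eop (-1) 0) (Fop (-1) 0) (spanGE (-1) 1) ∧
      IsIrreducibleSubmodule (Hop (-1)) (Eop (-1) 0) (Fop (-1) 0) (spanLE (-1) (-1))) := by
  refine ⟨⟨?_, ?_⟩, isCompl_GE_LE, irred_GE, irred_LE⟩
  · intro hcr
    have hn0 : n = 0 := by
      by_contra hn0
      obtain ⟨U, hUinv, hcompl⟩ := hcr (spanGE ε (n + 1)) (invariant_spanGE hn)
      have pm : (-1 : ℤˣ) ^ (n - 1) = ε := parity_pred hn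
      have pp : (-1 : ℤˣ) ^ (n + 1) = ε := parity_succ hn
      have hvtop : Finsupp.single (⟨n - 1, pm⟩ : idx ε) (1 : ℂ) ∈ spanGE ε (n + 1) ⊔ U := by
        rw [codisjoint_iff.mp hcompl.codisjoint]
        trivial
      obtain ⟨w, hw, u, hu, hwu⟩ := Submodule.mem_sup.mp hvtop
      have hw0 : w ⟨n - 1, pm⟩ = 0 := spanGE_vanish hw (show n - 1 < n + 1 by omega)
      have hu1 : u ⟨n - 1, pm⟩ = 1 := by
        have h := congrArg (fun z : V ε => z ⟨n - 1, pm⟩) hwu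
        simp only [Finsupp.add_apply] at h
        rw [hw0, zero_add] at h
        rw [h, Finsupp.single_eq_same]
      have hsu : Finsupp.single (⟨n - 1, pm⟩ : idx ε) (1 : ℂ) ∈ U := by
        have h := mem_proj hUinv.1 hu ⟨n - 1, pm⟩
        rwa [hu1] at h
      have hE := hUinv.2.1 _ hsu
      rw [Eop_single, one_smul] at hE
      have hc : (1 / 2 : ℂ) * ((n : ℂ) + (((n - 1 : ℤ)) : ℂ) + 1) = (n : ℂ) := by
        push_cast; ring
      rw [hc] at hE
      have hs1 : Finsupp.single (⟨n - 1 + 2, parity_shift pm parity_two⟩ : idx ε) (1 : ℂ) ∈ U :=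
        single_unscale (Int.cast_ne_zero.mpr hn0) hE
      rw [single_congr _ pp (by ring)] at hs1
      have hs2 : Finsupp.single (⟨n + 1, pp⟩ : idx ε) (1 : ℂ) ∈ spanGE ε (n + 1) :=
        single_mem_spanGE (j := ⟨n + 1, pp⟩) (show n + 1 ≤ n + 1 from le_rfl) _
      have h0 := Submodule.disjoint_def.mp hcompl.disjoint _ hs2 hs1
      exact one_ne_zero (Finsupp.single_eq_zero.mp h0)
    subst hn0
    refine ⟨?_, rfl⟩
    rcases Int.units_eq_one_or ε with rfl | rfl
    · exact absurd hn (by decide)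
    · rfl
  · rintro ⟨rfl, rfl⟩
    rw [show (((0 : ℤ)) : ℂ) = (0 : ℂ) from Int.cast_zero]
    intro W hW
    rcases classify hW with rfl | rfl | rfl | rfl
    · exact ⟨⊤, invariant_top _ _ _, isCompl_bot_top⟩
    · exact ⟨⊥, invariant_bot _ _ _, isCompl_top_bot⟩
    · exact ⟨spanLE (-1) (-1), invLE1, isCompl_GE_LE⟩
    · exact ⟨spanGE (-1) 1, invGE1, isCompl_GE_LE.symm⟩
end SL2Deform
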